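/- If G and H are finite simple graphs having no isolated vertices, then ι(G □ H) ≤ β(G)·β(H), where β denotes the vertex cover number. -/

import Mathlib

/-- The closed neighborhood `N[A]` of a set of vertices. -/
def closedNbhd {V : Type*} (G : SimpleGraph V) (A : Set V) : Set V :=
  {v | v ∈ A ∨ ∃ a ∈ A, G.Adj a v}

/-- A set of vertices is independent if it contains no edge. -/
def IndepSet {V : Type*} (G : SimpleGraph V) (S : Set V) : Prop :=
  ∀ u ∈ S, ∀ v ∈ S, ¬ G.Adj u v

/-- `A` is isolating if the vertices outside `N[A]` form an independent set. -/
def IsIsolating {V : Type*} (G : SimpleGraph V) (A : Set V) : Prop :=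
  IndepSet G (closedNbhd G A)ᶜ

/-- The isolation number `ι(G)`. -/
noncomputable def isolationNum {V : Type*} (G : SimpleGraph V) : ℕ :=
  sInf {n | ∃ A : Set V, IsIsolating G A ∧ A.ncard = n}

/-- `D` is a dominating set if `N[D] = V(G)`. -/
def IsDominating {V : Type*} (G : SimpleGraph V) (D : Set V) : Prop :=
  closedNbhd G D = Set.univ

/-- The domination number `γ(G)`. -/
noncomputable def dominationNum {V : Type*} (G : SimpleGraph V) : ℕ :=
  sInf {n | ∃ D : Set V, IsDominating G D ∧ D.ncard = n}
/-- The independence number `α(G)`. -/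
noncomputable def indepNum {V : Type*} (G : SimpleGraph V) : ℕ :=
  sSup {n | ∃ S : Set V, IndepSet G S ∧ S.ncard = n}

/-- A vertex cover: a set of vertices meeting every edge. -/
def IsVertexCover {V : Type*} (G : SimpleGraph V) (B : Set V) : Prop :=
  ∀ u v, G.Adj u v → u ∈ B ∨ v ∈ B

/-- The vertex cover number `β(G)`. -/
noncomputable def vertexCoverNum {V : Type*} (G : SimpleGraph V) : ℕ :=
  sInf {n | ∃ B : Set V, IsVertexCover G B ∧ B.ncard = n}

lemma ncard_prod_aux {α β : Type*} (s : Set α) (t : Set β) :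
    (s ×ˢ t).ncard = s.ncard * t.ncard := by
  rw [← Nat.card_coe_set_eq, ← Nat.card_coe_set_eq, ← Nat.card_coe_set_eq,
    Nat.card_congr (Equiv.Set.prod s t), Nat.card_prod]

lemma exists_min_cover {V : Type*} (G : SimpleGraph V) :
    ∃ B : Set V, IsVertexCover G B ∧ B.ncard = vertexCoverNum G := by
  have hne : {n | ∃ B : Set V, IsVertexCover G B ∧ B.ncard = n}.Nonempty :=
    ⟨(Set.univ : Set V).ncard, Set.univ, fun _ _ _ => Or.inl trivial, rfl⟩
  exact Nat.sInf_mem hne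

/-- If `G` and `H` have no isolated vertices, then `ι(G □ H) ≤ β(G)·β(H)`. -/
theorem isolation_boxProd_le_vertexCover_mul
    {V W : Type*} [Fintype V] [Fintype W] (G : SimpleGraph V) (H : SimpleGraph W)
    (hG : ∀ v : V, ∃ u, G.Adj v u) (hH : ∀ w : W, ∃ u, H.Adj w u) :
    isolationNum (G.boxProd H) ≤ vertexCoverNum G * vertexCoverNum H := by
  obtain ⟨B, hB, hBc⟩ := exists_min_cover G
  obtain ⟨C, hC, hCc⟩ := exists_min_cover H
  set A : Set (V × W) := B ×ˢ C with hA
  -- key: if the first coordinate is in B, the vertex is dominated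
  have key1 : ∀ g h, g ∈ B → (g, h) ∈ closedNbhd (G.boxProd H) A := by
    intro g h hg
    by_cases hh : h ∈ C
    · exact Or.inl ⟨hg, hh⟩
    · obtain ⟨u, hu⟩ := hH h
      have huC : u ∈ C := (hC h u hu).resolve_left hh
      exact Or.inr ⟨(g, u), ⟨hg, huC⟩, Or.inr ⟨hu.symm, rfl⟩⟩
  have key2 : ∀ g h, h ∈ C → (g, h) ∈ closedNbhd (G.boxProd H) A := by
    intro g h hh
    by_cases hg : g ∈ B
    · exact Or.inl ⟨hg, hh⟩
    · obtain ⟨u, hu⟩ := hG g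
      have huB : u ∈ B := (hB g u hu).resolve_left hg
      exact Or.inr ⟨(u, h), ⟨huB, hh⟩, Or.inl ⟨hu.symm, rfl⟩⟩
  have hiso : IsIsolating (G.boxProd H) A := by
    rintro ⟨g, h⟩ hgh ⟨g', h'⟩ hgh' hadj
    rcases hadj with ⟨hgg, rfl⟩ | ⟨hhh, rfl⟩
    · rcases hB g g' hgg with hg | hg'
      · exact hgh (key1 g h hg)
      · exact hgh' (key1 g' h hg')
    · rcases hC h h' hhh with hh | hh'
      · exact hgh (key2 g h hh)
      · exact hgh' (key2 g h' hh')
  calc isolationNum (G.boxProd H) ≤ A.ncard := Nat.sInf_le ⟨A, hiso, rfl⟩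
    _ = vertexCoverNum G * vertexCoverNum H := by
        rw [hA, ncard_prod_aux, hBc, hCc]
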